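/- Let G be a finite simple graph with at least 3 vertices. Then no automorphism of the Mycielskian μ(G) maps the root w to an original vertex. -/

import Mathlib

open SimpleGraph

/-- The generalized Mycielskian `μ_t(G)`: levels `0,…,t` of copies of `V(G)`
plus a root `none`. Level-0 vertices are the original vertices. -/
def genMyc {V : Type*} (G : SimpleGraph V) (t : ℕ) :
    SimpleGraph (Option (Fin (t + 1) × V)) :=
  SimpleGraph.fromRel fun a b =>
    match a, b with
    | some (s, i), some (s', j) =>
        ((s : ℕ) = 0 ∧ (s' : ℕ) = 0 ∧ G.Adj i j) ∨
        ((s' : ℕ) = (s : ℕ) + 1 ∧ G.Adj i j)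
    | some (s, _), none => (s : ℕ) = t
    | _, _ => False

/-- The (traditional) Mycielskian `μ(G)`. -/
def myc {V : Type*} (G : SimpleGraph V) : SimpleGraph (Option (Fin 2 × V)) :=
  genMyc G 1

/-- The star `K_{1,m}` with center `0` and `m` leaves. -/
def starG (m : ℕ) : SimpleGraph (Fin (m + 1)) :=
  SimpleGraph.fromRel fun a _ => a = 0

/-- A `d`-coloring is distinguishing if only the trivial automorphism preserves it. -/
def IsDistinguishing {V : Type*} (H : SimpleGraph V) (d : ℕ) (c : V → Fin d) : Prop :=
  ∀ φ : H ≃g H, (∀ v, c (φ v) = c v) → ∀ v, φ v = v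

/-- The distinguishing number of a graph. -/
noncomputable def distNum {V : Type*} (H : SimpleGraph V) : ℕ :=
  sInf {d | ∃ c : V → Fin d, IsDistinguishing H d c}

section MycAux
variable {V : Type*} (G : SimpleGraph V)
open scoped Classical
open Finset


lemma adj_none_iff (a : Fin 2 × V) : (myc G).Adj none (some a) ↔ a.1 = 1 := by
  obtain ⟨s, i⟩ := a
  simp only [myc, genMyc, fromRel_adj]
  constructor
  · rintro ⟨-, h | h⟩
    · exact absurd h id
    · exact Fin.ext (by simpa using h)
  · rintro rfl
    exact ⟨by simp, Or.inr rfl⟩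

lemma adj_00 (i j : V) : (myc G).Adj (some (0, i)) (some (0, j)) ↔ G.Adj i j := by
  simp only [myc, genMyc, fromRel_adj]
  constructor
  · rintro ⟨-, (⟨-,-,h⟩|⟨h1,h⟩) | (⟨-,-,h⟩|⟨h1,h⟩)⟩ <;> first | exact h | exact h.symm
  · intro h
    exact ⟨by simpa using h.ne, Or.inl (Or.inl ⟨rfl, rfl, h⟩)⟩

lemma adj_01 (i j : V) : (myc G).Adj (some (0, i)) (some (1, j)) ↔ G.Adj i j := by
  simp only [myc, genMyc, fromRel_adj]
  constructor
  · rintro ⟨-, (⟨-,h1,-⟩|⟨-,h⟩) | (⟨h1,-,-⟩|⟨h1,h⟩)⟩ <;> first | exact h | exact h.symm | simp at h1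
  · intro h
    exact ⟨by simp, Or.inl (Or.inr ⟨rfl, h⟩)⟩

lemma adj_11 (i j : V) : ¬ (myc G).Adj (some (1, i)) (some (1, j)) := by
  simp only [myc, genMyc, fromRel_adj]
  rintro ⟨-, (⟨h1,-⟩|⟨h1,-⟩) | (⟨h1,-⟩|⟨h1,-⟩)⟩ <;> simp at h1

-- omnibus adjacency case analysis
lemma adj_some_cases {x : Option (Fin 2 × V)} {a : Fin 2 × V} (h : (myc G).Adj (some a) x) :
    (x = none ∧ a.1 = 1) ∨ (∃ s j, x = some (s, j) ∧ G.Adj a.2 j ∧ ¬(a.1 = 1 ∧ s = 1)) := by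
  obtain ⟨s, i⟩ := a
  match x with
  | none => exact Or.inl ⟨rfl, by simpa using (adj_none_iff G (s, i)).mp h.symm⟩
  | some (s', j) =>
    refine Or.inr ⟨s', j, rfl, ?_, ?_⟩
    · rcases h with ⟨-, (⟨-,-,h⟩|⟨-,h⟩) | (⟨-,-,h⟩|⟨-,h⟩)⟩ <;> first | exact h | exact h.symm
    · rintro ⟨rfl, rfl⟩
      exact adj_11 G i j h

section fin
variable [Fintype V]
open scoped Classical

lemma nbhd_none : (myc G).neighborFinset none = Finset.univ.image (fun i : V => some (1, i)) := by
  ext x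
  simp only [mem_neighborFinset, Finset.mem_image, Finset.mem_univ, true_and]
  constructor
  · intro h
    match x with
    | none => exact absurd h ((myc G).loopless.irrefl none)
    | some (s, i) =>
      have := (adj_none_iff G (s, i)).mp h
      exact ⟨i, by simp_all⟩
  · rintro ⟨i, rfl⟩
    exact (adj_none_iff G (1, i)).mpr rfl

lemma deg_none : (myc G).degree none = Fintype.card V := by
  rw [degree, nbhd_none, Finset.card_image_of_injective _ (fun a b h => by simpa using h)]
  simp

lemma nbhd_v0 (v : V) : (myc G).neighborFinset (some (0, v)) =
    (G.neighborFinset v).image (fun j => some (0, j)) ∪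
    (G.neighborFinset v).image (fun j => some (1, j)) := by
  ext x
  simp only [mem_neighborFinset, Finset.mem_union, Finset.mem_image]
  constructor
  · intro h
    rcases adj_some_cases G h with ⟨rfl, h1⟩ | ⟨s, j, rfl, hadj, -⟩
    · simp at h1
    · match s with
      | 0 => exact Or.inl ⟨j, by simpa using hadj, rfl⟩
      | 1 => exact Or.inr ⟨j, by simpa using hadj, rfl⟩
  · rintro (⟨j, hj, rfl⟩ | ⟨j, hj, rfl⟩)
    · exact (adj_00 G v j).mpr (by simpa using hj)
    · exact (adj_01 G v j).mpr (by simpa using hj)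

lemma deg_v0 (v : V) : (myc G).degree (some (0, v)) = 2 * G.degree v := by
  rw [degree, nbhd_v0, Finset.card_union_of_disjoint, Finset.card_image_of_injective,
    Finset.card_image_of_injective]
  · rw [degree]; ring
  · exact fun a b h => by simpa using h
  · exact fun a b h => by simpa using h
  · rw [Finset.disjoint_left]
    intro x hx hy
    simp only [Finset.mem_image] at hx hy
    obtain ⟨j, -, rfl⟩ := hx
    obtain ⟨j', -, h⟩ := hy
    simp at h

lemma nbhd_u (v : V) : (myc G).neighborFinset (some (1, v)) =
    insert none ((G.neighborFinset v).image (fun j => some (0, j))) := by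
  ext x
  simp only [mem_neighborFinset, Finset.mem_insert, Finset.mem_image]
  constructor
  · intro h
    rcases adj_some_cases G h with ⟨rfl, -⟩ | ⟨s, j, rfl, hadj, hns⟩
    · exact Or.inl rfl
    · match s with
      | 0 => exact Or.inr ⟨j, by simpa using hadj, rfl⟩
      | 1 => exact absurd ⟨rfl, rfl⟩ hns
  · rintro (rfl | ⟨j, hj, rfl⟩)
    · exact ((adj_none_iff G (1, v)).mpr rfl).symm
    · exact ((adj_01 G j v).mpr hj.symm).symm

lemma deg_u (v : V) : (myc G).degree (some (1, v)) = G.degree v + 1 := by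
  rw [degree, nbhd_u, Finset.card_insert_of_notMem (by simp),
    Finset.card_image_of_injective _ (fun a b h => by simpa using h), degree]

lemma inter_v0_none (k : V) :
    ((myc G).neighborFinset (some (0, k)) ∩ (myc G).neighborFinset none).card = G.degree k := by
  rw [nbhd_v0, nbhd_none]
  have : ((G.neighborFinset k).image (fun j => some (0, j)) ∪
      (G.neighborFinset k).image (fun j => (some (1, j) : Option (Fin 2 × V)))) ∩
      Finset.univ.image (fun i : V => some (1, i)) =
      (G.neighborFinset k).image (fun j => some (1, j)) := by
    ext x
    simp only [Finset.mem_inter, Finset.mem_union, Finset.mem_image, Finset.mem_univ, true_and]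
    constructor
    · rintro ⟨⟨j, hj, rfl⟩ | ⟨j, hj, rfl⟩, ⟨i, hi⟩⟩
      · simp at hi
      · exact ⟨j, hj, rfl⟩
    · rintro ⟨j, hj, rfl⟩
      exact ⟨Or.inr ⟨j, hj, rfl⟩, ⟨j, rfl⟩⟩
  rw [this, Finset.card_image_of_injective _ (fun a b h => by simpa using h), degree]

lemma inter_u_v0 (v : V) :
    ((myc G).neighborFinset (some (1, v)) ∩ (myc G).neighborFinset (some (0, v))).card
      = G.degree v := by
  rw [nbhd_u, nbhd_v0]
  have : insert none ((G.neighborFinset v).image (fun j => (some (0, j) : Option (Fin 2 × V)))) ∩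
      ((G.neighborFinset v).image (fun j => some (0, j)) ∪
       (G.neighborFinset v).image (fun j => some (1, j))) =
      (G.neighborFinset v).image (fun j => some (0, j)) := by
    ext x
    simp only [Finset.mem_inter, Finset.mem_insert, Finset.mem_union, Finset.mem_image]
    constructor
    · rintro ⟨rfl | ⟨j, hj, rfl⟩, hr⟩
      · rcases hr with ⟨j, -, h⟩ | ⟨j, -, h⟩ <;> simp at h
      · exact ⟨j, hj, rfl⟩
    · rintro ⟨j, hj, rfl⟩
      exact ⟨Or.inr ⟨j, hj, rfl⟩, Or.inl ⟨j, hj, rfl⟩⟩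
  rw [this, Finset.card_image_of_injective _ (fun a b h => by simpa using h), degree]

end fin
lemma ncard_nbhd (v : V) [Fintype V] : (G.neighborSet v).ncard = G.degree v := by
  rw [degree, neighborFinset_def, Set.ncard_eq_toFinset_card']

lemma inter_v0_none_ncard [Fintype V] (k : V) :
    ((myc G).neighborSet (some (0, k)) ∩ (myc G).neighborSet none).ncard = G.degree k := by
  have hset : (myc G).neighborSet (some (0, k)) ∩ (myc G).neighborSet none
      = (fun j => (some (1, j) : Option (Fin 2 × V))) '' (G.neighborSet k) := by
    ext x
    simp only [Set.mem_inter_iff, mem_neighborSet, Set.mem_image]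
    constructor
    · rintro ⟨h1, h2⟩
      match x with
      | none => exact absurd ((by decide : ¬((0:Fin 2) = 1)) ((adj_none_iff G (0, k)).mp h1.symm)) not_false
      | some (0, j) => exact absurd ((by decide : ¬((0:Fin 2) = 1)) ((adj_none_iff G (0, j)).mp h2)) not_false
      | some (1, j) => exact ⟨j, (adj_01 G k j).mp h1, rfl⟩
    · rintro ⟨j, hj, rfl⟩
      exact ⟨(adj_01 G k j).mpr hj, (adj_none_iff G (1, j)).mpr rfl⟩
  rw [hset, Set.ncard_image_of_injective _ (fun a b h => by simpa using h), ncard_nbhd]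

lemma inter_u_v0_ncard [Fintype V] (v : V) :
    ((myc G).neighborSet (some (1, v)) ∩ (myc G).neighborSet (some (0, v))).ncard
      = G.degree v := by
  have hset : (myc G).neighborSet (some (1, v)) ∩ (myc G).neighborSet (some (0, v))
      = (fun j => (some (0, j) : Option (Fin 2 × V))) '' (G.neighborSet v) := by
    ext x
    simp only [Set.mem_inter_iff, mem_neighborSet, Set.mem_image]
    constructor
    · rintro ⟨h1, h2⟩
      match x with
      | none => exact absurd ((by decide : ¬((0:Fin 2) = 1)) ((adj_none_iff G (0, v)).mp h2.symm)) not_false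
      | some (0, j) => exact ⟨j, (adj_00 G v j).mp h2, rfl⟩
      | some (1, j) => exact absurd h1 (adj_11 G v j)
    · rintro ⟨j, hj, rfl⟩
      exact ⟨((adj_01 G j v).mpr hj.symm).symm, (adj_00 G v j).mpr hj⟩
  rw [hset, Set.ncard_image_of_injective _ (fun a b h => by simpa using h), ncard_nbhd]
end MycAux

section isoS
open SimpleGraph

section isoS
variable {W : Type*} (H : SimpleGraph W)

lemma iso_image_nbhdS (φ : H ≃g H) (x : W) :
    φ '' (H.neighborSet x) = H.neighborSet (φ x) := by
  ext z
  simp only [Set.mem_image, mem_neighborSet]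
  constructor
  · rintro ⟨w, hw, rfl⟩
    exact φ.map_adj_iff.mpr hw
  · intro h
    refine ⟨φ.symm z, ?_, by simp⟩
    have := φ.symm.map_adj_iff.mpr h
    simpa using this

lemma iso_inter_ncard (φ : H ≃g H) (x y : W) :
    (H.neighborSet (φ x) ∩ H.neighborSet (φ y)).ncard
      = (H.neighborSet x ∩ H.neighborSet y).ncard := by
  rw [← iso_image_nbhdS H φ x, ← iso_image_nbhdS H φ y, ← Set.image_inter φ.injective,
    Set.ncard_image_of_injective _ φ.injective]
end isoS

section isoF
open scoped Classical
variable {W : Type*} [Fintype W] (H : SimpleGraph W)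
lemma iso_nbhd (φ : H ≃g H) (x : W) :
    H.neighborFinset (φ x) = (H.neighborFinset x).image φ := by
  ext y
  simp only [mem_neighborFinset, Finset.mem_image]
  constructor
  · intro h
    refine ⟨φ.symm y, ?_, by simp⟩
    have := φ.symm.map_adj_iff.mpr h
    simpa using this
  · rintro ⟨z, hz, rfl⟩
    exact φ.map_adj_iff.mpr hz

lemma iso_degree (φ : H ≃g H) (x : W) : H.degree (φ x) = H.degree x := by
  rw [degree, degree, iso_nbhd, Finset.card_image_of_injective _ φ.injective]

end isoF



theorem stmt_1 {V : Type*} [Fintype V] (G : SimpleGraph V)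
    (hn : 3 ≤ Fintype.card V) :
    ∀ φ : myc G ≃g myc G, ∀ v : V, φ none ≠ some (0, v) := by
  classical
  intro φ v hv
  have h1 : G.degree v + G.degree v = Fintype.card V := by
    have h := iso_degree (myc G) φ none
    rw [hv, deg_v0, deg_none] at h
    omega
  have hd2 : 2 ≤ G.degree v := by omega
  obtain ⟨k, hk⟩ : ∃ k, φ.symm (some (1, v)) = some (0, k) := by
    rcases hx : φ.symm (some (1, v)) with _ | ⟨s, k⟩
    · exfalso
      have h : φ none = some (1, v) := by rw [← hx]; simp
      rw [hv] at h
      simp only [Option.some.injEq, Prod.mk.injEq] at h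
      exact absurd h.1 (by decide)
    · have hφx : φ (some (s, k)) = some (1, v) := by rw [← hx]; simp
      match s with
      | 0 => exact ⟨k, rfl⟩
      | 1 =>
        exfalso
        have hadj : (myc G).Adj none (some (1, k)) := (adj_none_iff G (1, k)).mpr rfl
        have h := φ.map_adj_iff.mpr hadj
        rw [hv, hφx] at h
        exact G.loopless.irrefl v ((adj_01 G v v).mp h)
  have hφk : φ (some (0, k)) = some (1, v) := by rw [← hk]; simp
  have h4 : G.degree v + 1 = 2 * G.degree k := by
    have h := iso_degree (myc G) φ (some (0, k))
    rw [hφk, deg_u, deg_v0] at h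
    omega
  have h5 : G.degree v = G.degree k := by
    have h := iso_inter_ncard (myc G) φ (some (0, k)) none
    rw [hφk, hv, inter_u_v0_ncard, inter_v0_none_ncard] at h
    omega
  omega
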